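/- arXiv:2107.04065 — 2 statements merged into one kernel-verified Lean document; each statement's English description precedes it below -/
import Mathlib

section
/- Let α ∈ (0,2). There exists a constant A_α > 0 such that for every u in the weighted Sobolev space H¹_α one has |u(1)| ≤ A_α ‖u‖_{H¹_α}. Moreover one may take A_α = min over λ ∈ (0,1) of (1-λ)^(-1/2) + (1-λ)^(1/2) λ^(-α/2). -/
open MeasureTheory intervalIntegral Set
open scoped ENNReal

private noncomputable def fA (α μ : ℝ) : ℝ :=
  (1 - μ) ^ (-(1/2 : ℝ)) + (1 - μ) ^ ((1/2 : ℝ)) * μ ^ (-(α/2))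

private lemma pigeonhole {lam : ℝ} (hl : lam < 1) {g : ℝ → ℝ}
    (hg : IntegrableOn g (Set.Ioc lam 1)) {c : ℝ}
    (hc : ∫ x in Set.Ioc lam 1, g x ≤ c * (1 - lam)) :
    ∃ x ∈ Set.Ioc lam 1, g x ≤ c := by
  by_contra h
  push_neg at h
  have hfin : volume (Set.Ioc lam 1) < ⊤ := by
    rw [Real.volume_Ioc]; exact ENNReal.ofReal_lt_top
  have hF : IntegrableOn (fun x => g x - c) (Set.Ioc lam 1) :=
    hg.sub (integrableOn_const hfin.ne)
  have hnn : 0 ≤ᵐ[volume.restrict (Set.Ioc lam 1)] fun x => g x - c := by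
    filter_upwards [ae_restrict_mem measurableSet_Ioc] with x hx
    have := h x hx; simp only [Pi.zero_apply]; linarith
  have hpos : 0 < ∫ x in Set.Ioc lam 1, (g x - c) := by
    rw [setIntegral_pos_iff_support_of_nonneg_ae hnn hF]
    have hsub : Set.Ioc lam 1 ⊆ Function.support (fun x => g x - c) ∩ Set.Ioc lam 1 :=
      fun x hx => ⟨Function.mem_support.mpr (sub_ne_zero.mpr (ne_of_gt (h x hx))), hx⟩
    calc (0:ℝ≥0∞) < volume (Set.Ioc lam 1) := by
          rw [Real.volume_Ioc]; exact ENNReal.ofReal_pos.mpr (by linarith)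
      _ ≤ _ := measure_mono hsub
  have heq : ∫ x in Set.Ioc lam 1, (g x - c) =
      (∫ x in Set.Ioc lam 1, g x) - c * (1 - lam) := by
    rw [integral_sub hg (integrableOn_const hfin.ne)]
    congr 1
    rw [setIntegral_const, measureReal_def, Real.volume_Ioc, smul_eq_mul,
      ENNReal.toReal_ofReal (by linarith), mul_comm]
  rw [heq] at hpos
  linarith

private lemma key_bound (α lam : ℝ) (hα : 0 < α) (hlam : lam ∈ Set.Ioo (0:ℝ) 1)
    (u u' : ℝ → ℝ) (hmeas : Measurable u')
    (hftc : ∀ x ∈ Set.Ioc (0:ℝ) 1, ∀ y ∈ Set.Ioc (0:ℝ) 1,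
      IntervalIntegrable u' volume x y ∧ u y - u x = ∫ ξ in x..y, u' ξ)
    (hu2 : IntegrableOn (fun x => (u x)^2) (Set.Ioc (0:ℝ) 1))
    (hu'2 : IntegrableOn (fun x => x ^ α * (u' x)^2) (Set.Ioc (0:ℝ) 1)) :
    |u 1| ≤ fA α lam * Real.sqrt ((∫ x in Set.Ioc (0:ℝ) 1, (u x)^2)
      + ∫ x in Set.Ioc (0:ℝ) 1, x ^ α * (u' x)^2) := by
  obtain ⟨hl0, hl1⟩ := hlam
  set N1 : ℝ := ∫ x in Set.Ioc (0:ℝ) 1, (u x)^2 with hN1def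
  set N2 : ℝ := ∫ x in Set.Ioc (0:ℝ) 1, x ^ α * (u' x)^2 with hN2def
  have hN1 : 0 ≤ N1 := setIntegral_nonneg measurableSet_Ioc (fun x _ => sq_nonneg _)
  have hN2 : 0 ≤ N2 := setIntegral_nonneg measurableSet_Ioc
    (fun x hx => mul_nonneg (Real.rpow_nonneg hx.1.le _) (sq_nonneg _))
  set m : ℝ := 1 - lam with hm
  have hm0 : 0 < m := by simp only [hm]; linarith
  have hssub : Set.Ioc lam 1 ⊆ Set.Ioc (0:ℝ) 1 := Set.Ioc_subset_Ioc hl0.le le_rfl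
  have hlam01 : lam ∈ Set.Ioc (0:ℝ) 1 := ⟨hl0, hl1.le⟩
  have h101 : (1:ℝ) ∈ Set.Ioc (0:ℝ) 1 := ⟨one_pos, le_rfl⟩
  have hint : IntegrableOn u' (Set.Ioc lam 1) :=
    (intervalIntegrable_iff_integrableOn_Ioc_of_le hl1.le).mp (hftc lam hlam01 1 h101).1
  have hu2r : IntegrableOn (fun x => (u x)^2) (Set.Ioc lam 1) := hu2.mono_set hssub
  have hu2le : ∫ x in Set.Ioc lam 1, (u x)^2 ≤ N1 :=
    setIntegral_mono_set hu2 (Filter.Eventually.of_forall (fun x => sq_nonneg _))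
      (HasSubset.Subset.eventuallyLE hssub)
  obtain ⟨x₀, hx₀, hx₀le⟩ : ∃ x ∈ Set.Ioc lam 1, (u x)^2 ≤ N1 / m := by
    apply pigeonhole hl1 hu2r
    rw [← hm, div_mul_cancel₀ _ (ne_of_gt hm0)]
    exact hu2le
  have hx₀01 : x₀ ∈ Set.Ioc (0:ℝ) 1 := hssub hx₀
  have habs : |u x₀| ≤ Real.sqrt N1 / Real.sqrt m := by
    rw [← Real.sqrt_div hN1, ← Real.sqrt_sq_eq_abs]
    exact Real.sqrt_le_sqrt hx₀le
  have hftc' := (hftc x₀ hx₀01 1 h101).2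
  have hbound1 : |u 1| ≤ |u x₀| + |∫ ξ in x₀..1, u' ξ| := by
    have h : u 1 = u x₀ + (u 1 - u x₀) := by ring
    rw [h, hftc']
    exact abs_add_le _ _
  have habs' : |∫ ξ in x₀..1, u' ξ| ≤ ∫ x in Set.Ioc lam 1, |u' x| := by
    have h1 : |∫ ξ in x₀..1, u' ξ| ≤ ∫ ξ in x₀..1, |u' ξ| :=
      intervalIntegral.abs_integral_le_integral_abs hx₀.2
    have h2 : ∫ ξ in x₀..1, |u' ξ| = ∫ x in Set.Ioc x₀ 1, |u' x| :=
      intervalIntegral.integral_of_le hx₀.2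
    have h3 : ∫ x in Set.Ioc x₀ 1, |u' x| ≤ ∫ x in Set.Ioc lam 1, |u' x| :=
      setIntegral_mono_set hint.abs
        (Filter.Eventually.of_forall (fun x => abs_nonneg _))
        (HasSubset.Subset.eventuallyLE (Set.Ioc_subset_Ioc hx₀.1.le le_rfl))
    exact (h1.trans_eq h2).trans h3
  -- Cauchy-Schwarz for the derivative term
  set g : ℝ → ℝ := fun x => x ^ (α/2) * |u' x| with hgdef
  have hgmeas : Measurable g :=
    ((Real.continuous_rpow_const (by positivity)).measurable).mul hmeas.abs
  have hgsq : ∀ x ∈ Set.Ioc lam 1, g x ^ 2 = x ^ α * (u' x)^2 := by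
    intro x hx
    have hx0 : (0:ℝ) ≤ x := le_trans hl0.le hx.1.le
    simp only [hgdef]
    rw [mul_pow, sq_abs, ← Real.rpow_natCast (x ^ (α/2)) 2, ← Real.rpow_mul hx0]
    norm_num
  have hgsq_int : IntegrableOn (fun x => g x ^ 2) (Set.Ioc lam 1) :=
    (hu'2.mono_set hssub).congr_fun (fun x hx => (hgsq x hx).symm) measurableSet_Ioc
  have hg_int : IntegrableOn g (Set.Ioc lam 1) := by
    apply Integrable.mono hint.abs hgmeas.aestronglyMeasurable
    filter_upwards [ae_restrict_mem measurableSet_Ioc] with x hx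
    have hx0 : (0:ℝ) ≤ x := le_trans hl0.le hx.1.le
    have h1 : x ^ (α/2) ≤ 1 := Real.rpow_le_one hx0 hx.2 (by positivity)
    have h2 : 0 ≤ g x := mul_nonneg (Real.rpow_nonneg hx0 _) (abs_nonneg _)
    rw [Real.norm_of_nonneg h2, Real.norm_of_nonneg (abs_nonneg _)]
    calc g x = x ^ (α/2) * |u' x| := rfl
      _ ≤ 1 * |u' x| := mul_le_mul_of_nonneg_right h1 (abs_nonneg _)
      _ = |u' x| := one_mul _
  have hgsq_le : ∫ x in Set.Ioc lam 1, g x ^ 2 ≤ N2 := by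
    have h1 : ∫ x in Set.Ioc lam 1, g x ^ 2 = ∫ x in Set.Ioc lam 1, x ^ α * (u' x)^2 :=
      setIntegral_congr_fun measurableSet_Ioc hgsq
    rw [h1]
    exact setIntegral_mono_set hu'2
      (by filter_upwards [ae_restrict_mem measurableSet_Ioc] with x hx using
        mul_nonneg (Real.rpow_nonneg hx.1.le _) (sq_nonneg _))
      (HasSubset.Subset.eventuallyLE hssub)
  haveI : IsFiniteMeasure (volume.restrict (Set.Ioc lam 1)) :=
    ⟨by rw [Measure.restrict_apply_univ, Real.volume_Ioc]; exact ENNReal.ofReal_lt_top⟩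
  have holder : ∫ x in Set.Ioc lam 1, g x ≤ Real.sqrt m * Real.sqrt N2 := by
    have hpq : Real.HolderConjugate 2 2 := Real.HolderConjugate.two_two
    have hone : MemLp (fun _ : ℝ => (1:ℝ)) (ENNReal.ofReal 2) (volume.restrict (Set.Ioc lam 1)) := by
      rw [show ENNReal.ofReal 2 = 2 by norm_num]
      exact memLp_const 1
    have hgLp : MemLp g (ENNReal.ofReal 2) (volume.restrict (Set.Ioc lam 1)) := by
      rw [show ENNReal.ofReal 2 = 2 by norm_num]
      exact (memLp_two_iff_integrable_sq hgmeas.aestronglyMeasurable).mpr hgsq_int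
    have := MeasureTheory.integral_mul_le_Lp_mul_Lq_of_nonneg hpq
      (Filter.Eventually.of_forall (fun x => zero_le_one))
      (by filter_upwards [ae_restrict_mem measurableSet_Ioc] with x hx using
        mul_nonneg (Real.rpow_nonneg (le_trans hl0.le hx.1.le) _) (abs_nonneg _))
      hone hgLp
    simp only [one_mul] at this
    have e1 : ∫ x in Set.Ioc lam 1, (1:ℝ) ^ (2:ℝ) = m := by
      simp only [Real.one_rpow]
      rw [setIntegral_const, measureReal_def, Real.volume_Ioc, smul_eq_mul, mul_one,
        ENNReal.toReal_ofReal (by linarith)]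
    have e2 : ∫ x in Set.Ioc lam 1, g x ^ (2:ℝ) = ∫ x in Set.Ioc lam 1, g x ^ 2 := by
      apply setIntegral_congr_fun measurableSet_Ioc
      intro x hx
      have h := Real.rpow_natCast (g x) 2
      push_cast at h
      exact h
    rw [e1, e2] at this
    calc ∫ x in Set.Ioc lam 1, g x
        ≤ m ^ (1/(2:ℝ)) * (∫ x in Set.Ioc lam 1, g x ^ 2) ^ (1/(2:ℝ)) := this
      _ = Real.sqrt m * Real.sqrt (∫ x in Set.Ioc lam 1, g x ^ 2) := by
          rw [Real.sqrt_eq_rpow, Real.sqrt_eq_rpow]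
      _ ≤ Real.sqrt m * Real.sqrt N2 := by
          apply mul_le_mul_of_nonneg_left (Real.sqrt_le_sqrt hgsq_le) (Real.sqrt_nonneg _)
  have hpt : ∀ x ∈ Set.Ioc lam 1, |u' x| ≤ lam ^ (-(α/2)) * g x := by
    intro x hx
    have h1 : lam ^ (α/2) ≤ x ^ (α/2) := Real.rpow_le_rpow hl0.le hx.1.le (by positivity)
    have hlp : 0 < lam ^ (α/2) := Real.rpow_pos_of_pos hl0 _
    have h2 : (1:ℝ) ≤ lam ^ (-(α/2)) * x ^ (α/2) := by
      rw [Real.rpow_neg hl0.le, inv_mul_eq_div, le_div_iff₀ hlp, one_mul]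
      exact h1
    calc |u' x| = 1 * |u' x| := (one_mul _).symm
      _ ≤ (lam ^ (-(α/2)) * x ^ (α/2)) * |u' x| := mul_le_mul_of_nonneg_right h2 (abs_nonneg _)
      _ = lam ^ (-(α/2)) * g x := by simp only [hgdef]; ring
  have hIle : ∫ x in Set.Ioc lam 1, |u' x| ≤ lam ^ (-(α/2)) * ∫ x in Set.Ioc lam 1, g x := by
    rw [← MeasureTheory.integral_const_mul]
    exact setIntegral_mono_on hint.abs (hg_int.const_mul _) measurableSet_Ioc hpt
  -- assemble
  have hgI_nonneg : 0 ≤ lam ^ (-(α/2)) := Real.rpow_nonneg hl0.le _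
  have hfinal : |u 1| ≤ Real.sqrt N1 / Real.sqrt m
      + lam ^ (-(α/2)) * (Real.sqrt m * Real.sqrt N2) := by
    have h4 : lam ^ (-(α/2)) * ∫ x in Set.Ioc lam 1, g x
        ≤ lam ^ (-(α/2)) * (Real.sqrt m * Real.sqrt N2) :=
      mul_le_mul_of_nonneg_left holder hgI_nonneg
    linarith [hbound1, habs, habs', hIle]
  have hsm : 0 < Real.sqrt m := Real.sqrt_pos.mpr hm0
  have hfa : fA α lam = (Real.sqrt m)⁻¹ + Real.sqrt m * lam ^ (-(α/2)) := by
    simp only [fA, ← hm]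
    rw [Real.rpow_neg hm0.le, ← Real.sqrt_eq_rpow]
  set S : ℝ := Real.sqrt (N1 + N2) with hS
  have hS1 : Real.sqrt N1 ≤ S := Real.sqrt_le_sqrt (by linarith)
  have hS2 : Real.sqrt N2 ≤ S := Real.sqrt_le_sqrt (by linarith)
  have hSnn : 0 ≤ S := Real.sqrt_nonneg _
  calc |u 1| ≤ Real.sqrt N1 / Real.sqrt m
      + lam ^ (-(α/2)) * (Real.sqrt m * Real.sqrt N2) := hfinal
    _ ≤ (Real.sqrt m)⁻¹ * S + Real.sqrt m * lam ^ (-(α/2)) * S := by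
        have t1 : Real.sqrt N1 / Real.sqrt m ≤ (Real.sqrt m)⁻¹ * S := by
          rw [div_eq_inv_mul]
          exact mul_le_mul_of_nonneg_left hS1 (inv_nonneg.mpr hsm.le)
        have t2 : lam ^ (-(α/2)) * (Real.sqrt m * Real.sqrt N2)
            ≤ Real.sqrt m * lam ^ (-(α/2)) * S := by
          rw [show lam ^ (-(α/2)) * (Real.sqrt m * Real.sqrt N2)
            = Real.sqrt m * lam ^ (-(α/2)) * Real.sqrt N2 by ring]
          exact mul_le_mul_of_nonneg_left hS2 (by positivity)
        linarith
    _ = fA α lam * S := by rw [hfa]; ring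

private lemma fA_min (α : ℝ) (hα : 0 < α) :
    ∃ lam ∈ Set.Ioo (0:ℝ) 1, ∀ μ ∈ Set.Ioo (0:ℝ) 1, fA α lam ≤ fA α μ := by
  have hcont : ContinuousOn (fA α) (Set.Ioo (0:ℝ) 1) := by
    apply ContinuousOn.add
    · apply ContinuousOn.rpow_const (by fun_prop)
      intro x hx
      exact Or.inl (fun h => absurd (sub_eq_zero.mp h).symm (ne_of_lt hx.2))
    · apply ContinuousOn.mul
      · apply ContinuousOn.rpow_const (by fun_prop)
        intro x hx
        exact Or.inl (fun h => absurd (sub_eq_zero.mp h).symm (ne_of_lt hx.2))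
      · apply ContinuousOn.rpow_const (by fun_prop)
        intro x hx; exact Or.inl (ne_of_gt hx.1)
  set M : ℝ := fA α (1/2) with hM
  have hMpos : 0 < M := by
    have h1 : (0:ℝ) < (1 - 1/2) ^ (-(1/2 : ℝ)) := Real.rpow_pos_of_pos (by norm_num) _
    have h2 : (0:ℝ) ≤ (1 - 1/2) ^ ((1/2 : ℝ)) * (1/2:ℝ) ^ (-(α/2)) :=
      mul_nonneg (Real.rpow_nonneg (by norm_num) _) (Real.rpow_nonneg (by norm_num) _)
    simp only [hM, fA]; linarith
  set p : ℝ := (1/2:ℝ) ^ ((1/2:ℝ)) with hp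
  have hppos : 0 < p := Real.rpow_pos_of_pos (by norm_num) _
  set c : ℝ := (p / M) ^ (2/α) with hc
  have hcpos : 0 < c := Real.rpow_pos_of_pos (div_pos hppos hMpos) _
  set a : ℝ := min (1/2) c with ha
  have hapos : 0 < a := lt_min (by norm_num) hcpos
  set b : ℝ := max (1/2) (1 - (M⁻¹)^2) with hb
  have hblt : b < 1 := by
    apply max_lt (by norm_num)
    have : 0 < (M⁻¹)^2 := pow_pos (inv_pos.mpr hMpos) 2
    linarith
  have hleft : ∀ μ ∈ Set.Ioo (0:ℝ) 1, μ < a → M ≤ fA α μ := by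
    intro μ hμ hμa
    have hμhalf : μ ≤ 1/2 := le_of_lt (lt_of_lt_of_le hμa (min_le_left _ _))
    have hμc : μ ≤ c := le_of_lt (lt_of_lt_of_le hμa (min_le_right _ _))
    have hcpow : c ^ (α/2) = p / M := by
      rw [hc, ← Real.rpow_mul (div_pos hppos hMpos).le]
      rw [show (2/α)*(α/2) = 1 by field_simp]
      exact Real.rpow_one _
    have h1 : μ ^ (α/2) ≤ p / M := by
      rw [← hcpow]
      exact Real.rpow_le_rpow hμ.1.le hμc (by positivity)
    have hμpow : 0 < μ ^ (α/2) := Real.rpow_pos_of_pos hμ.1 _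
    have h2 : M / p ≤ μ ^ (-(α/2)) := by
      rw [Real.rpow_neg hμ.1.le, show M / p = (p / M)⁻¹ by rw [inv_div]]
      exact inv_anti₀ hμpow h1
    have h3 : p ≤ (1 - μ) ^ ((1/2:ℝ)) :=
      Real.rpow_le_rpow (by norm_num) (by linarith) (by norm_num)
    have h4 : p * (M / p) ≤ (1 - μ) ^ ((1/2:ℝ)) * μ ^ (-(α/2)) :=
      mul_le_mul h3 h2 (div_pos hMpos hppos).le (Real.rpow_nonneg (by linarith [hμ.2]) _)
    have h5 : p * (M / p) = M := by field_simp
    have h6 : (0:ℝ) ≤ (1 - μ) ^ (-(1/2:ℝ)) := Real.rpow_nonneg (by linarith [hμ.2]) _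
    simp only [fA]; rw [h5] at h4; linarith
  have hright : ∀ μ ∈ Set.Ioo (0:ℝ) 1, b < μ → M ≤ fA α μ := by
    intro μ hμ hμb
    have h1μ : 0 < 1 - μ := by linarith [hμ.2]
    have hμb' : 1 - μ < (M⁻¹)^2 := by
      have := lt_of_le_of_lt (le_max_right (1/2:ℝ) _) hμb
      linarith
    have hs : Real.sqrt (1 - μ) ≤ M⁻¹ := by
      have := Real.sqrt_le_sqrt hμb'.le
      rwa [Real.sqrt_sq (inv_pos.mpr hMpos).le] at this
    have hspos : 0 < Real.sqrt (1 - μ) := Real.sqrt_pos.mpr h1μ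
    have h1 : M ≤ (1 - μ) ^ (-(1/2:ℝ)) := by
      rw [Real.rpow_neg h1μ.le, ← Real.sqrt_eq_rpow]
      calc M = (M⁻¹)⁻¹ := (inv_inv M).symm
        _ ≤ (Real.sqrt (1 - μ))⁻¹ := inv_anti₀ hspos hs
    have h2 : (0:ℝ) ≤ (1 - μ) ^ ((1/2:ℝ)) * μ ^ (-(α/2)) :=
      mul_nonneg (Real.rpow_nonneg h1μ.le _) (Real.rpow_nonneg hμ.1.le _)
    simp only [fA]; linarith
  have hab1 : a ≤ 1/2 := min_le_left _ _
  have hab2 : (1/2:ℝ) ≤ b := le_max_left _ _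
  have hKsub : Set.Icc a b ⊆ Set.Ioo (0:ℝ) 1 := fun x hx =>
    ⟨lt_of_lt_of_le hapos hx.1, lt_of_le_of_lt hx.2 hblt⟩
  obtain ⟨lam, hlamK, hmin⟩ := isCompact_Icc.exists_isMinOn
    ⟨1/2, hab1, hab2⟩ (hcont.mono hKsub)
  refine ⟨lam, hKsub hlamK, ?_⟩
  intro μ hμ
  by_cases hμK : μ ∈ Set.Icc a b
  · exact isMinOn_iff.mp hmin μ hμK
  · have hlamM : fA α lam ≤ M := isMinOn_iff.mp hmin (1/2) ⟨hab1, hab2⟩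
    rw [Set.mem_Icc] at hμK
    rcases not_and_or.mp hμK with h | h
    · exact hlamM.trans (hleft μ hμ (lt_of_not_ge h))
    · exact hlamM.trans (hright μ hμ (lt_of_not_ge h))


/-- there is a constant `A_α > 0` (one may take
`A_α = min_{λ∈(0,1)} (1-λ)^(-1/2) + (1-λ)^(1/2) λ^(-α/2)`) such that every `u` with
finite `H¹_α` norm (here `u` absolutely continuous on `(0,1]`, modeled via FTC with
derivative `u'`, with `u ∈ L²(0,1)` and `x^(α/2)u' ∈ L²(0,1)`) satisfies
`|u 1| ≤ A_α ‖u‖_{H¹_α}`. -/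
theorem stmt4 (α : ℝ) (hα : α ∈ Set.Ioo (0:ℝ) 2) :
    ∃ A : ℝ, 0 < A ∧
      (∃ lam ∈ Set.Ioo (0:ℝ) 1,
        A = (1 - lam) ^ (-(1/2 : ℝ)) + (1 - lam) ^ ((1/2 : ℝ)) * lam ^ (-(α/2)) ∧
        ∀ μ ∈ Set.Ioo (0:ℝ) 1,
          A ≤ (1 - μ) ^ (-(1/2 : ℝ)) + (1 - μ) ^ ((1/2 : ℝ)) * μ ^ (-(α/2))) ∧
      ∀ u u' : ℝ → ℝ,
        Measurable u' →
        (∀ x ∈ Set.Ioc (0:ℝ) 1, ∀ y ∈ Set.Ioc (0:ℝ) 1,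
          IntervalIntegrable u' volume x y ∧ u y - u x = ∫ ξ in x..y, u' ξ) →
        IntegrableOn (fun x => (u x)^2) (Set.Ioc (0:ℝ) 1) →
        IntegrableOn (fun x => x ^ α * (u' x)^2) (Set.Ioc (0:ℝ) 1) →
        |u 1| ≤ A * Real.sqrt ((∫ x in Set.Ioc (0:ℝ) 1, (u x)^2)
          + ∫ x in Set.Ioc (0:ℝ) 1, x ^ α * (u' x)^2) := by
  obtain ⟨lam, hlam, hmin⟩ := fA_min α hα.1
  refine ⟨fA α lam, ?_, ⟨lam, hlam, rfl, hmin⟩, ?_⟩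
  · have h1 : (0:ℝ) < (1 - lam) ^ (-(1/2 : ℝ)) :=
      Real.rpow_pos_of_pos (by linarith [hlam.2]) _
    have h2 : (0:ℝ) ≤ (1 - lam) ^ ((1/2 : ℝ)) * lam ^ (-(α/2)) :=
      mul_nonneg (Real.rpow_nonneg (by linarith [hlam.2]) _) (Real.rpow_nonneg hlam.1.le _)
    simp only [fA]; linarith
  · intro u u' hmeas hftc hu2 hu'2
    exact key_bound α lam hα.1 hlam u u' hmeas hftc hu2 hu'2
end

section
/- Let α ∈ (0,2). There exists B_α > 0 such that for every u ∈ H²_α one has |u'(1)| ≤ B_α ‖u‖_{H²_α}. One may take B_α = min over λ ∈ (0,1) of λ^(-α/2)(1-λ)^(-1/2) + (1-λ)^(1/2) (4λ^(-2α) + 4α² λ^(-(2+α)))^(1/2). -/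
open MeasureTheory intervalIntegral Set


lemma cs_aux {s : Set ℝ} (hs : MeasurableSet s) (hfin : volume s ≠ ⊤) {g : ℝ → ℝ}
    (hg : AEMeasurable g (volume.restrict s))
    (h2 : IntegrableOn (fun x => (g x)^2) s) :
    ∫ x in s, |g x| ≤ Real.sqrt ((volume s).toReal) * Real.sqrt (∫ x in s, (g x)^2) := by
  haveI : IsFiniteMeasure (volume.restrict s) :=
    ⟨by rwa [Measure.restrict_apply_univ, lt_top_iff_ne_top]⟩
  have hmem : MemLp g 2 (volume.restrict s) :=
    (memLp_two_iff_integrable_sq hg.aestronglyMeasurable).2 h2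
  have hone : MemLp (fun _ : ℝ => (1:ℝ)) 2 (volume.restrict s) := memLp_const 1
  have hpq : Real.HolderConjugate 2 2 := Real.holderConjugate_iff.mpr ⟨one_lt_two, by norm_num⟩
  have h := integral_mul_le_Lp_mul_Lq_of_nonneg (μ := volume.restrict s) hpq
    (f := fun x => |g x|) (g := fun _ => (1:ℝ))
    (Filter.Eventually.of_forall fun x => abs_nonneg _)
    (Filter.Eventually.of_forall fun x => zero_le_one)
    (by rw [show ENNReal.ofReal 2 = 2 by norm_num]; exact hmem.abs) (by simpa using hone)
  simp only [mul_one] at h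
  have e1 : ∫ x in s, |g x| ^ (2:ℝ) = ∫ x in s, (g x)^2 := by
    refine setIntegral_congr_fun hs fun x _ => ?_
    rw [show ((2:ℝ)) = ((2:ℕ):ℝ) by norm_num, Real.rpow_natCast, sq_abs]
  have e2 : ∫ _x in s, (1:ℝ) ^ (2:ℝ) = (volume s).toReal := by
    simp [Real.one_rpow, measureReal_def]
  rw [e1, e2] at h
  calc ∫ x in s, |g x| ≤ (∫ x in s, (g x)^2) ^ (1/(2:ℝ)) * ((volume s).toReal) ^ (1/(2:ℝ)) := h
    _ = Real.sqrt ((volume s).toReal) * Real.sqrt (∫ x in s, (g x)^2) := by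
        rw [← Real.sqrt_eq_rpow, ← Real.sqrt_eq_rpow, mul_comm]

lemma integrableOn_of_sq {s : Set ℝ} (hs : MeasurableSet s) (hfin : volume s ≠ ⊤) {g : ℝ → ℝ}
    (hg : AEMeasurable g (volume.restrict s))
    (h2 : IntegrableOn (fun x => (g x)^2) s) : IntegrableOn g s := by
  haveI : IsFiniteMeasure (volume.restrict s) :=
    ⟨by rwa [Measure.restrict_apply_univ, lt_top_iff_ne_top]⟩
  have hmem : MemLp g 2 (volume.restrict s) :=
    (memLp_two_iff_integrable_sq hg.aestronglyMeasurable).2 h2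
  exact memLp_one_iff_integrable.1 (hmem.mono_exponent (by norm_num))


noncomputable def Fb (α μ : ℝ) : ℝ :=
  μ ^ (-(α/2)) * (1 - μ) ^ (-(1/2 : ℝ))
    + (1 - μ) ^ ((1/2 : ℝ)) * Real.sqrt (4 * μ ^ (-(2*α)) + 4 * α^2 * μ ^ (-(2+α)))

lemma Fb_lower {α : ℝ} (hα : 0 < α) {μ : ℝ} (hμ : μ ∈ Set.Ioo (0:ℝ) 1) :
    μ ^ (-(α/2)) ≤ Fb α μ ∧ (1 - μ) ^ (-(1/2:ℝ)) ≤ Fb α μ := by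
  obtain ⟨h0, h1⟩ := hμ
  have ht : (0:ℝ) < 1 - μ := by linarith
  have hsec : 0 ≤ (1 - μ) ^ ((1/2 : ℝ)) * Real.sqrt (4 * μ ^ (-(2*α)) + 4 * α^2 * μ ^ (-(2+α))) :=
    mul_nonneg (Real.rpow_nonneg ht.le _) (Real.sqrt_nonneg _)
  have hA : (1:ℝ) ≤ (1 - μ) ^ (-(1/2:ℝ)) :=
    Real.one_le_rpow_of_pos_of_le_one_of_nonpos ht (by linarith) (by norm_num)
  have hB : (1:ℝ) ≤ μ ^ (-(α/2)) :=
    Real.one_le_rpow_of_pos_of_le_one_of_nonpos h0 h1.le (by linarith)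
  constructor
  · have : μ ^ (-(α/2)) * 1 ≤ μ ^ (-(α/2)) * (1 - μ) ^ (-(1/2:ℝ)) :=
      mul_le_mul_of_nonneg_left hA (Real.rpow_nonneg h0.le _)
    simp only [mul_one] at this
    unfold Fb; linarith
  · have : 1 * (1 - μ) ^ (-(1/2:ℝ)) ≤ μ ^ (-(α/2)) * (1 - μ) ^ (-(1/2:ℝ)) :=
      mul_le_mul_of_nonneg_right hB (Real.rpow_nonneg ht.le _)
    simp only [one_mul] at this
    unfold Fb; linarith

lemma exists_min (α : ℝ) (hα : α ∈ Set.Ioo (0:ℝ) 2) :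
    ∃ lam ∈ Set.Ioo (0:ℝ) 1, ∀ μ ∈ Set.Ioo (0:ℝ) 1, Fb α lam ≤ Fb α μ := by
  obtain ⟨hα0, hα2⟩ := hα
  set c := Fb α (1/2) with hc
  have hhalf : (1/2:ℝ) ∈ Set.Ioo (0:ℝ) 1 := by norm_num
  have hc1 : (1:ℝ) < c := by
    have := (Fb_lower hα0 hhalf).2
    have h2 : (1:ℝ) < ((1:ℝ) - 1/2) ^ (-(1/2:ℝ)) :=
      Real.one_lt_rpow_of_pos_of_lt_one_of_neg (by norm_num) (by norm_num) (by norm_num)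
    linarith
  set ε₀ : ℝ := c ^ (-(2/α)) with hε₀
  set ε₁ : ℝ := c ^ (-(2:ℝ)) with hε₁
  have hcpos : (0:ℝ) < c := by linarith
  have hε₀pos : 0 < ε₀ := Real.rpow_pos_of_pos hcpos _
  have hε₁pos : 0 < ε₁ := Real.rpow_pos_of_pos hcpos _
  have hε₀lt : ε₀ < 1 := Real.rpow_lt_one_of_one_lt_of_neg hc1 (neg_lt_zero.mpr (by positivity))
  have hε₁lt : ε₁ < 1 := Real.rpow_lt_one_of_one_lt_of_neg hc1 (by norm_num)
  set ε : ℝ := min (min ε₀ ε₁) (1/2) with hε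
  have hεpos : 0 < ε := lt_min (lt_min hε₀pos hε₁pos) (by norm_num)
  have hεhalf : ε ≤ 1/2 := min_le_right _ _
  have hK : IsCompact (Set.Icc ε (1-ε)) := isCompact_Icc
  have hKne : (Set.Icc ε (1-ε)).Nonempty := ⟨1/2, hεhalf, by linarith⟩
  have hKsub : Set.Icc ε (1-ε) ⊆ Set.Ioo (0:ℝ) 1 := fun x hx =>
    ⟨lt_of_lt_of_le hεpos hx.1, by have := hx.2; linarith⟩
  have hcont : ContinuousOn (Fb α) (Set.Icc ε (1-ε)) := by
    intro x hx
    have hx0 : x ≠ 0 := ne_of_gt (hKsub hx).1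
    have hx1 : (1:ℝ) - x ≠ 0 := by have := (hKsub hx).2; intro h; linarith [h]
    apply ContinuousAt.continuousWithinAt
    have cm : ContinuousAt (fun μ : ℝ => 1 - μ) x := by fun_prop
    have c1 : ContinuousAt (fun μ : ℝ => μ ^ (-(α/2))) x :=
      Real.continuousAt_rpow_const x _ (Or.inl hx0)
    have c2 : ContinuousAt (fun μ : ℝ => (1-μ) ^ (-(1/2:ℝ))) x :=
      (Real.continuousAt_rpow_const (1-x) _ (Or.inl hx1)).comp cm
    have c3 : ContinuousAt (fun μ : ℝ => (1-μ) ^ ((1/2:ℝ))) x :=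
      (Real.continuousAt_rpow_const (1-x) _ (Or.inl hx1)).comp cm
    have c5 : ContinuousAt (fun μ : ℝ => μ ^ (-(2*α))) x :=
      Real.continuousAt_rpow_const x _ (Or.inl hx0)
    have c6 : ContinuousAt (fun μ : ℝ => μ ^ (-(2+α))) x :=
      Real.continuousAt_rpow_const x _ (Or.inl hx0)
    exact (c1.mul c2).add (c3.mul (Real.continuous_sqrt.continuousAt.comp
      ((continuousAt_const.mul c5).add (continuousAt_const.mul c6))))
  obtain ⟨lam, hlamK, hmin⟩ := hK.exists_isMinOn hKne hcont
  refine ⟨lam, hKsub hlamK, fun μ hμ => ?_⟩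
  by_cases hμK : μ ∈ Set.Icc ε (1-ε)
  · exact hmin hμK
  · have hlc : Fb α lam ≤ c := hmin ⟨hεhalf, by linarith⟩
    have : c ≤ Fb α μ := by
      rcases lt_or_ge μ ε with h | hge
      · -- μ < ε ≤ ε₀
        have hμε₀ : μ ≤ ε₀ := le_trans h.le (le_trans (min_le_left _ _) (min_le_left _ _))
        have : ε₀ ^ (-(α/2)) ≤ μ ^ (-(α/2)) :=
          Real.rpow_le_rpow_of_nonpos hμ.1 hμε₀ (by linarith)
        have heq : ε₀ ^ (-(α/2)) = c := by
          rw [hε₀, ← Real.rpow_mul hcpos.le]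
          rw [show -(2/α) * -(α/2) = 1 by field_simp, Real.rpow_one]
        calc c = ε₀ ^ (-(α/2)) := heq.symm
          _ ≤ μ ^ (-(α/2)) := this
          _ ≤ Fb α μ := (Fb_lower hα0 hμ).1
      · have h : 1 - ε < μ := by
          by_contra hcon; push_neg at hcon; exact hμK ⟨hge, hcon⟩
        have hμε₁ : 1 - μ ≤ ε₁ := by
          have hεε₁ : ε ≤ ε₁ := le_trans (min_le_left _ _) (min_le_right _ _)
          linarith
        have h1μ : (0:ℝ) < 1 - μ := by linarith [hμ.2]
        have : ε₁ ^ (-(1/2:ℝ)) ≤ (1-μ) ^ (-(1/2:ℝ)) :=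
          Real.rpow_le_rpow_of_nonpos h1μ hμε₁ (by norm_num)
        have heq : ε₁ ^ (-(1/2:ℝ)) = c := by
          rw [hε₁, ← Real.rpow_mul hcpos.le]
          norm_num
        calc c = ε₁ ^ (-(1/2:ℝ)) := heq.symm
          _ ≤ (1-μ) ^ (-(1/2:ℝ)) := this
          _ ≤ Fb α μ := (Fb_lower hα0 hμ).2
    linarith

lemma stmt7_main (α : ℝ) (hα : α ∈ Set.Ioo (0:ℝ) 2) (lam : ℝ) (hlam : lam ∈ Set.Ioo (0:ℝ) 1)
    (B : ℝ)
    (hB : lam ^ (-(α/2)) * (1 - lam) ^ (-(1/2 : ℝ))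
            + (1 - lam) ^ ((1/2 : ℝ))
              * Real.sqrt (4 * lam ^ (-(2*α)) + 4 * α^2 * lam ^ (-(2+α))) = B) :
      ∀ u u' h : ℝ → ℝ,
        Measurable u' → Measurable h →
        (∀ x ∈ Set.Ioc (0:ℝ) 1, ∀ y ∈ Set.Ioc (0:ℝ) 1,
          IntervalIntegrable u' volume x y ∧ u y - u x = ∫ ξ in x..y, u' ξ) →
        (∀ x ∈ Set.Ioc (0:ℝ) 1, ∀ y ∈ Set.Ioc (0:ℝ) 1,
          IntervalIntegrable h volume x y ∧
            y ^ (α/2) * u' y - x ^ (α/2) * u' x = ∫ ξ in x..y, h ξ) →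
        IntegrableOn (fun x => (u x)^2) (Set.Ioc (0:ℝ) 1) →
        IntegrableOn (fun x => x ^ α * (u' x)^2) (Set.Ioc (0:ℝ) 1) →
        IntegrableOn (fun x => (h x)^2) (Set.Ioc (0:ℝ) 1) →
        |u' 1| ≤ B * Real.sqrt ((∫ x in Set.Ioc (0:ℝ) 1, (u x)^2)
          + (∫ x in Set.Ioc (0:ℝ) 1, x ^ α * (u' x)^2)
          + ∫ x in Set.Ioc (0:ℝ) 1, (h x)^2) := by
  obtain ⟨hα0, hα2⟩ := hα
  obtain ⟨hl0, hl1⟩ := hlam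
  intro u u' h hmu' hmh hFTC1 hFTC2 hI1 hI2 hI3
  set s : Set ℝ := Set.Ioc lam 1 with hs_def
  set t : ℝ := 1 - lam with ht_def
  have ht0 : 0 < t := by simp [ht_def]; linarith
  have hsub : s ⊆ Set.Ioc (0:ℝ) 1 := Set.Ioc_subset_Ioc hl0.le le_rfl
  have hsmeas : MeasurableSet s := measurableSet_Ioc
  have hvol : volume s = ENNReal.ofReal t := by rw [hs_def, Real.volume_Ioc]
  have hvolne : volume s ≠ ⊤ := by rw [hvol]; exact ENNReal.ofReal_ne_top
  have hvolto : (volume s).toReal = t := by rw [hvol, ENNReal.toReal_ofReal ht0.le]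
  set v : ℝ → ℝ := fun x => x ^ (α/2) * u' x with hv_def
  have hvmeas : Measurable v := ((Real.continuous_rpow_const (by positivity)).measurable).mul hmu'
  -- v² = x^α u'² on s
  have hvsq : ∀ x ∈ s, (v x)^2 = x ^ α * (u' x)^2 := by
    intro x hx
    have hx0 : (0:ℝ) < x := lt_trans hl0 hx.1
    have : (x ^ (α/2))^2 = x ^ α := by
      rw [sq, ← Real.rpow_add hx0]; norm_num
    rw [hv_def]; simp only []
    rw [mul_pow, this]
  have hIvsq : IntegrableOn (fun x => (v x)^2) s :=
    (hI2.mono_set hsub).congr_fun (fun x hx => (hvsq x hx).symm) hsmeas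
  have hIhsq : IntegrableOn (fun x => (h x)^2) s := hI3.mono_set hsub
  have hIv1 : IntegrableOn v s :=
    integrableOn_of_sq hsmeas hvolne hvmeas.aemeasurable hIvsq
  have hIh1 : IntegrableOn h s :=
    integrableOn_of_sq hsmeas hvolne hmh.aemeasurable hIhsq
  set A1 : ℝ := ∫ x in Set.Ioc (0:ℝ) 1, (u x)^2 with hA1
  set A2 : ℝ := ∫ x in Set.Ioc (0:ℝ) 1, x ^ α * (u' x)^2 with hA2
  set A3 : ℝ := ∫ x in Set.Ioc (0:ℝ) 1, (h x)^2 with hA3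
  have hA1n : 0 ≤ A1 := setIntegral_nonneg measurableSet_Ioc fun x _ => sq_nonneg _
  have hA2n : 0 ≤ A2 := setIntegral_nonneg measurableSet_Ioc fun x hx =>
    mul_nonneg (Real.rpow_nonneg hx.1.le _) (sq_nonneg _)
  have hA3n : 0 ≤ A3 := setIntegral_nonneg measurableSet_Ioc fun x _ => sq_nonneg _
  set S : ℝ := Real.sqrt (A1 + A2 + A3) with hS
  have hSn : 0 ≤ S := Real.sqrt_nonneg _
  -- bounds on partial L² norms
  have hv2le : ∫ x in s, (v x)^2 ≤ A2 := by
    calc ∫ x in s, (v x)^2 = ∫ x in s, x ^ α * (u' x)^2 :=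
          setIntegral_congr_fun hsmeas fun x hx => hvsq x hx
      _ ≤ A2 := by
          refine setIntegral_mono_set hI2 ?_ (HasSubset.Subset.eventuallyLE hsub)
          refine (ae_restrict_iff' measurableSet_Ioc).2 (ae_of_all _ fun x hx => ?_)
          exact mul_nonneg (Real.rpow_nonneg hx.1.le _) (sq_nonneg _)
  have hh2le : ∫ x in s, (h x)^2 ≤ A3 := by
    refine setIntegral_mono_set hI3 ?_ (HasSubset.Subset.eventuallyLE hsub)
    exact ae_of_all _ fun x => sq_nonneg _
  have hv2n : 0 ≤ ∫ x in s, (v x)^2 := setIntegral_nonneg hsmeas fun x _ => sq_nonneg _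
  have hh2n : 0 ≤ ∫ x in s, (h x)^2 := setIntegral_nonneg hsmeas fun x _ => sq_nonneg _
  set st : ℝ := Real.sqrt t with hst
  have hst0 : 0 < st := Real.sqrt_pos.2 ht0
  have hst2 : st^2 = t := Real.sq_sqrt ht0.le
  -- Cauchy-Schwarz bounds
  have hvCS : ∫ x in s, |v x| ≤ st * S := by
    calc ∫ x in s, |v x| ≤ Real.sqrt ((volume s).toReal) * Real.sqrt (∫ x in s, (v x)^2) :=
          cs_aux hsmeas hvolne hvmeas.aemeasurable hIvsq
      _ ≤ st * S := by
          rw [hvolto]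
          exact mul_le_mul_of_nonneg_left
            (Real.sqrt_le_sqrt (by linarith)) (Real.sqrt_nonneg _)
  have hhCS : ∫ x in s, |h x| ≤ st * S := by
    calc ∫ x in s, |h x| ≤ Real.sqrt ((volume s).toReal) * Real.sqrt (∫ x in s, (h x)^2) :=
          cs_aux hsmeas hvolne hmh.aemeasurable hIhsq
      _ ≤ st * S := by
          rw [hvolto]
          exact mul_le_mul_of_nonneg_left
            (Real.sqrt_le_sqrt (by linarith)) (Real.sqrt_nonneg _)
  set C : ℝ := ∫ x in s, |h x| with hC
  have hCn : 0 ≤ C := setIntegral_nonneg hsmeas fun x _ => abs_nonneg _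
  -- key pointwise identity
  have hkey : ∀ x ∈ s, u' 1 = v x + ∫ ξ in x..1, h ξ := by
    intro x hx
    have hx01 : x ∈ Set.Ioc (0:ℝ) 1 := hsub hx
    have h1m : (1:ℝ) ∈ Set.Ioc (0:ℝ) 1 := by norm_num
    have := (hFTC2 x hx01 1 h1m).2
    rw [Real.one_rpow, one_mul] at this
    rw [hv_def]; simp only []
    linarith
  -- bound on the remainder integral
  have hIh_bd : ∀ x ∈ s, |∫ ξ in x..1, h ξ| ≤ C := by
    intro x hx
    have hx1 : x ≤ 1 := hx.2
    rw [intervalIntegral.integral_of_le hx1]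
    calc |∫ ξ in Set.Ioc x 1, h ξ| ≤ ∫ ξ in Set.Ioc x 1, |h ξ| := by
          simpa using norm_integral_le_integral_norm (μ := volume.restrict (Set.Ioc x 1)) h
      _ ≤ C := by
          refine setIntegral_mono_set hIh1.abs (ae_of_all _ fun x => abs_nonneg _) ?_
          exact HasSubset.Subset.eventuallyLE (Set.Ioc_subset_Ioc hx.1.le le_rfl)
  -- integral identity
  have hconst : IntegrableOn (fun _ : ℝ => u' 1) s := by
    refine integrableOn_const ?_
    rw [hvol]; exact ENNReal.ofReal_lt_top.ne
  have heq1 : t * u' 1 = ∫ x in s, (v x + ∫ ξ in x..1, h ξ) := by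
    have h1 : ∫ x in s, (fun _ : ℝ => u' 1) x = (volume s).toReal • u' 1 :=
      setIntegral_const _
    have e := setIntegral_congr_fun (μ := volume) (s := s) (f := fun _ : ℝ => u' 1)
      (g := fun x => v x + ∫ ξ in x..1, h ξ) hsmeas (fun x hx => hkey x hx)
    rw [← e, h1, hvolto, smul_eq_mul]
  -- main estimate
  have hbound : t * |u' 1| ≤ st * S + t * (st * S) := by
    have e1 : |t * u' 1| = t * |u' 1| := by
      rw [abs_mul, abs_of_pos ht0]
    have hIsum : IntegrableOn (fun x => v x + ∫ ξ in x..1, h ξ) s := by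
      refine hconst.congr_fun (fun x hx => hkey x hx) hsmeas
    have step1 : |∫ x in s, (v x + ∫ ξ in x..1, h ξ)| ≤
        ∫ x in s, |v x + ∫ ξ in x..1, h ξ| := by
      simpa using norm_integral_le_integral_norm
        (μ := volume.restrict s) (fun x => v x + ∫ ξ in x..1, h ξ)
    have step2 : ∫ x in s, |v x + ∫ ξ in x..1, h ξ| ≤ ∫ x in s, (|v x| + C) := by
      refine setIntegral_mono_on (hIsum.abs) (hIv1.abs.add (integrableOn_const
        ((by rw [hvol]; exact ENNReal.ofReal_lt_top.ne)))) hsmeas fun x hx => ?_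
      calc |v x + ∫ ξ in x..1, h ξ| ≤ |v x| + |∫ ξ in x..1, h ξ| := abs_add_le _ _
        _ ≤ |v x| + C := by linarith [hIh_bd x hx]
    have step3 : ∫ x in s, (|v x| + C) = (∫ x in s, |v x|) + t * C := by
      rw [integral_add hIv1.abs (integrableOn_const
        ((by rw [hvol]; exact ENNReal.ofReal_lt_top.ne)))]
      congr 1
      rw [setIntegral_const, measureReal_def, hvolto, smul_eq_mul]
    have : t * |u' 1| ≤ (∫ x in s, |v x|) + t * C := by
      rw [← e1, heq1]
      calc |∫ x in s, (v x + ∫ ξ in x..1, h ξ)| ≤ ∫ x in s, (|v x| + C) :=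
            le_trans step1 step2
        _ = (∫ x in s, |v x|) + t * C := step3
    have htC : t * C ≤ t * (st * S) := mul_le_mul_of_nonneg_left hhCS ht0.le
    linarith [hvCS]
  -- conclude
  have hBe : (1/st + st) ≤ B := by
    rw [← hB]
    have h1 : (1:ℝ) ≤ lam ^ (-(α/2)) :=
      Real.one_le_rpow_of_pos_of_le_one_of_nonpos hl0 hl1.le (by linarith)
    have h2 : t ^ (-(1/2:ℝ)) = 1/st := by
      rw [Real.rpow_neg ht0.le, ← Real.sqrt_eq_rpow, one_div]
    have h3 : t ^ ((1/2:ℝ)) = st := (Real.sqrt_eq_rpow t).symm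
    have h4 : (1:ℝ) ≤ Real.sqrt (4 * lam ^ (-(2*α)) + 4 * α^2 * lam ^ (-(2+α))) := by
      rw [show (1:ℝ) = Real.sqrt 1 by simp]
      apply Real.sqrt_le_sqrt
      have : (1:ℝ) ≤ lam ^ (-(2*α)) :=
        Real.one_le_rpow_of_pos_of_le_one_of_nonpos hl0 hl1.le (by linarith)
      have h5 : 0 ≤ 4 * α^2 * lam ^ (-(2+α)) := by positivity
      linarith
    rw [h2, h3]
    have t1 : 1/st * 1 ≤ lam ^ (-(α/2)) * (1/st) := by
      rw [mul_one]
      calc 1/st = 1 * (1/st) := (one_mul _).symm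
        _ ≤ lam ^ (-(α/2)) * (1/st) := by
            apply mul_le_mul_of_nonneg_right h1; positivity
    have t2 : st * 1 ≤ st * Real.sqrt (4 * lam ^ (-(2*α)) + 4 * α^2 * lam ^ (-(2+α))) :=
      mul_le_mul_of_nonneg_left h4 hst0.le
    rw [mul_one] at t1 t2
    linarith
  have hfinal : |u' 1| ≤ (1/st + st) * S := by
    have hh : t * |u' 1| ≤ t * ((1/st + st) * S) := by
      have : t * ((1/st + st) * S) = (t/st) * S + t * (st * S) := by ring
      rw [this]
      have : t / st = st := by
        rw [← hst2, sq, mul_div_assoc, div_self (ne_of_gt hst0), mul_one]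
      rw [this]
      linarith [hbound]
    exact le_of_mul_le_mul_left hh ht0
  calc |u' 1| ≤ (1/st + st) * S := hfinal
    _ ≤ B * S := mul_le_mul_of_nonneg_right hBe hSn

/-- there is `B_α > 0` (one may take
`B_α = min_{λ∈(0,1)} λ^(-α/2)(1-λ)^(-1/2) + (1-λ)^(1/2)(4λ^(-2α)+4α²λ^(-(2+α)))^(1/2)`)
such that every `u ∈ H²_α` (modeled via derivatives `u'` and `h := (x^(α/2)u')'`,
with FTC hypotheses and the three squared norms finite) satisfies
`|u'(1)| ≤ B_α ‖u‖_{H²_α}`. -/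
theorem stmt7 (α : ℝ) (hα : α ∈ Set.Ioo (0:ℝ) 2) :
    ∃ B : ℝ, 0 < B ∧
      (∃ lam ∈ Set.Ioo (0:ℝ) 1,
        B = lam ^ (-(α/2)) * (1 - lam) ^ (-(1/2 : ℝ))
            + (1 - lam) ^ ((1/2 : ℝ))
              * Real.sqrt (4 * lam ^ (-(2*α)) + 4 * α^2 * lam ^ (-(2+α))) ∧
        ∀ μ ∈ Set.Ioo (0:ℝ) 1,
          B ≤ μ ^ (-(α/2)) * (1 - μ) ^ (-(1/2 : ℝ))
            + (1 - μ) ^ ((1/2 : ℝ))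
              * Real.sqrt (4 * μ ^ (-(2*α)) + 4 * α^2 * μ ^ (-(2+α)))) ∧
      ∀ u u' h : ℝ → ℝ,
        Measurable u' → Measurable h →
        (∀ x ∈ Set.Ioc (0:ℝ) 1, ∀ y ∈ Set.Ioc (0:ℝ) 1,
          IntervalIntegrable u' volume x y ∧ u y - u x = ∫ ξ in x..y, u' ξ) →
        (∀ x ∈ Set.Ioc (0:ℝ) 1, ∀ y ∈ Set.Ioc (0:ℝ) 1,
          IntervalIntegrable h volume x y ∧
            y ^ (α/2) * u' y - x ^ (α/2) * u' x = ∫ ξ in x..y, h ξ) →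
        IntegrableOn (fun x => (u x)^2) (Set.Ioc (0:ℝ) 1) →
        IntegrableOn (fun x => x ^ α * (u' x)^2) (Set.Ioc (0:ℝ) 1) →
        IntegrableOn (fun x => (h x)^2) (Set.Ioc (0:ℝ) 1) →
        |u' 1| ≤ B * Real.sqrt ((∫ x in Set.Ioc (0:ℝ) 1, (u x)^2)
          + (∫ x in Set.Ioc (0:ℝ) 1, x ^ α * (u' x)^2)
          + ∫ x in Set.Ioc (0:ℝ) 1, (h x)^2) := by
  obtain ⟨lam, hlam, hmin⟩ := exists_min α hα
  have hBpos : 0 < Fb α lam := by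
    have h1 : 0 < lam ^ (-(α/2)) * (1 - lam) ^ (-(1/2:ℝ)) :=
      mul_pos (Real.rpow_pos_of_pos hlam.1 _)
        (Real.rpow_pos_of_pos (by linarith [hlam.2]) _)
    have h2 : 0 ≤ (1 - lam) ^ ((1/2 : ℝ))
        * Real.sqrt (4 * lam ^ (-(2*α)) + 4 * α^2 * lam ^ (-(2+α))) :=
      mul_nonneg (Real.rpow_nonneg (by linarith [hlam.2]) _) (Real.sqrt_nonneg _)
    unfold Fb; linarith
  refine ⟨Fb α lam, hBpos, ⟨lam, hlam, rfl, fun μ hμ => hmin μ hμ⟩, ?_⟩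
  exact stmt7_main α hα lam hlam (Fb α lam) rfl
end
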